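/- Let A = {e_1,…,e_d} be an orthonormal basis of ℂ^d and let B = {c_1,…,c_{d²}} be a set of d² unit vectors, each unbiased to A, such that for all 1 ≤ j ≠ k ≤ d² the vectors c_j and c_k are either orthogonal or unbiased to each other. Form the d × d² matrix M with entries M_{j,t} = ⟨e_j, c_t⟩ (so each entry has modulus 1/√d, in particular is nonzero), and for 1 ≤ j ≠ k ≤ d define the vector r_{j/k} ∈ ℂ^{d²} by r_{j/k}(t) = M_{j,t}/M_{k,t}. Then: (i) for any two ordered pairs (j,k) ≠ (s,q) with j ≠ k and s ≠ q one has ⟨r_{j/k}, r_{s/q}⟩ = 0; and (ii) for every j ≠ k, ∑_{t=1}^{d²} r_{j/k}(t) = 0, i.e. r_{j/k} is orthogonal to the all-ones vector (1,1,…,1) ∈ ℂ^{d²}. In particular the d(d−1) vectors r_{j/k} together with the all-ones vector form a system of d(d−1)+1 pairwise orthogonal vectors in ℂ^{d²}. -/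

import Mathlib

open scoped ComplexInnerProductSpace ComplexConjugate

noncomputable section MUBAux
open Finset

open scoped Classical

variable {d : ℕ}

/-- Gram entries of the columns. -/
def gMat (M : Fin d → Fin (d ^ 2) → ℂ) (s t : Fin (d ^ 2)) : ℂ :=
  ∑ j, conj (M j s) * M j t

/-- Orthogonality adjacency between columns. -/
def AdjM (M : Fin d → Fin (d ^ 2) → ℂ) (s t : Fin (d ^ 2)) : Prop :=
  s ≠ t ∧ gMat M s t = 0

/-- Orthogonality neighbours. -/
def NbrM (M : Fin d → Fin (d ^ 2) → ℂ) (s : Fin (d ^ 2)) : Finset (Fin (d ^ 2)) :=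
  univ.filter (fun t => AdjM M s t)

def ReachM (M : Fin d → Fin (d ^ 2) → ℂ) : Fin (d ^ 2) → Fin (d ^ 2) → Prop :=
  Relation.ReflTransGen (AdjM M)

def compM (M : Fin d → Fin (d ^ 2) → ℂ) (s : Fin (d ^ 2)) : Finset (Fin (d ^ 2)) :=
  univ.filter (fun t => ReachM M s t)

def inK (M : Fin d → Fin (d ^ 2) → ℂ) (x : Fin (d ^ 2) → ℂ) : Prop :=
  ∀ j k : Fin d, j ≠ k → ∑ t, x t * (M j t * conj (M k t)) = 0

def inK' (M : Fin d → Fin (d ^ 2) → ℂ) (x : Fin (d ^ 2) → ℂ) : Prop :=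
  ∀ s, ((d : ℂ) - 1) * x s = ∑ t ∈ NbrM M s, x t

def inK'R (M : Fin d → Fin (d ^ 2) → ℂ) (y : Fin (d ^ 2) → ℝ) : Prop :=
  ∀ s, ((d : ℝ) - 1) * y s = ∑ t ∈ NbrM M s, y t

section Basic

variable (M : Fin d → Fin (d ^ 2) → ℂ)

lemma gMat_self (h1 : ∀ j t, conj (M j t) * M j t = 1 / d) (hd : 1 ≤ d)
    (s : Fin (d ^ 2)) : gMat M s s = 1 := by
  have hdC : (d : ℂ) ≠ 0 := by
    exact_mod_cast (Nat.pos_of_ne_zero (by omega)).ne'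
  simp only [gMat]
  rw [Finset.sum_congr rfl (fun j _ => h1 j s), Finset.sum_const, Finset.card_univ,
    Fintype.card_fin, nsmul_eq_mul]
  field_simp

lemma gMat_conj (s t : Fin (d ^ 2)) : gMat M t s = conj (gMat M s t) := by
  simp only [gMat, map_sum, map_mul, RingHom.id_apply, Complex.conj_conj]
  exact Finset.sum_congr rfl fun j _ => (mul_comm _ _)

lemma AdjM_symm {s t : Fin (d ^ 2)} (h : AdjM M s t) : AdjM M t s := by
  refine ⟨h.1.symm, ?_⟩
  rw [gMat_conj, h.2, map_zero]

lemma mem_NbrM {s t : Fin (d ^ 2)} : t ∈ NbrM M s ↔ s ≠ t ∧ gMat M s t = 0 := by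
  simp only [NbrM, Finset.mem_filter, Finset.mem_univ, true_and]
  exact Iff.rfl

lemma ReachM_symm {s t : Fin (d ^ 2)} (h : ReachM M s t) : ReachM M t s := by
  have : Symmetric (AdjM M) := fun a b hab => AdjM_symm M hab
  exact (haveI : Std.Symm (AdjM M) := ⟨fun a b hab => this hab⟩; (Relation.ReflTransGen.stdSymm (r := AdjM M)).symm _ _ h)

lemma mem_compM {s t : Fin (d ^ 2)} : t ∈ compM M s ↔ ReachM M s t := by
  simp [compM]

lemma mem_compM_self (s : Fin (d ^ 2)) : s ∈ compM M s :=
  (mem_compM M).2 Relation.ReflTransGen.refl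

lemma compM_eq {s t : Fin (d ^ 2)} (h : ReachM M s t) : compM M s = compM M t := by
  ext u
  simp only [mem_compM]
  exact ⟨fun hu => .trans (ReachM_symm M h) hu, fun hu => .trans h hu⟩

lemma NbrM_subset_compM (s : Fin (d ^ 2)) : NbrM M s ⊆ compM M s \ {s} := by
  intro t ht
  rw [mem_NbrM] at ht
  rw [Finset.mem_sdiff, mem_compM, Finset.mem_singleton]
  exact ⟨Relation.ReflTransGen.single ⟨ht.1, ht.2⟩, fun h => ht.1 h.symm⟩

lemma NbrM_mem_trans {s t u : Fin (d ^ 2)} (h : t ∈ compM M s) (h2 : u ∈ NbrM M t) :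
    u ∈ compM M s := by
  rw [mem_compM] at h ⊢
  rw [mem_NbrM] at h2
  exact h.tail ⟨h2.1, h2.2⟩

end Basic

section Quadratic

variable (M : Fin d → Fin (d ^ 2) → ℂ)

/-- Row-pair sums. -/
def YM (x : Fin (d ^ 2) → ℂ) (j k : Fin d) : ℂ := ∑ t, x t * (M j t * conj (M k t))

lemma comm3 {α β γ : Type*} [Fintype α] [Fintype β] [Fintype γ]
    (G : α → β → γ → ℂ) :
    (∑ j, ∑ s, ∑ t, G j s t) = ∑ s, ∑ t, ∑ j, G j s t := by
  rw [Finset.sum_comm]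
  exact Finset.sum_congr rfl fun s _ => Finset.sum_comm

lemma L_factor (s t : Fin (d ^ 2)) :
    ∑ j, ∑ k, conj (M j s * conj (M k s)) * (M j t * conj (M k t))
      = gMat M s t * conj (gMat M s t) := by
  have hc : gMat M s t * conj (gMat M s t)
      = (∑ j, conj (M j s) * M j t) * (∑ k, M k s * conj (M k t)) := by
    congr 1
    simp only [gMat, map_sum, map_mul, Complex.conj_conj]
  rw [hc, Finset.sum_mul_sum]
  refine Finset.sum_congr rfl fun j _ => Finset.sum_congr rfl fun k _ => ?_
  simp only [map_mul, Complex.conj_conj]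
  ring

lemma L_diag (h1 : ∀ j t, conj (M j t) * M j t = 1 / d) (hd : 1 ≤ d) (s t : Fin (d ^ 2)) :
    ∑ j, conj (M j s * conj (M j s)) * (M j t * conj (M j t)) = 1 / d := by
  have hdC : (d : ℂ) ≠ 0 := by exact_mod_cast (Nat.pos_of_ne_zero (by omega)).ne'
  have hterm : ∀ j : Fin d, conj (M j s * conj (M j s)) * (M j t * conj (M j t))
      = 1 / d * (1 / d) := by
    intro j
    have e1 : M j s * conj (M j s) = 1 / d := by rw [mul_comm]; exact h1 j s
    have e2 : M j t * conj (M j t) = 1 / d := by rw [mul_comm]; exact h1 j t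
    rw [e1, e2]
    norm_num
  rw [Finset.sum_congr rfl fun j _ => hterm j, Finset.sum_const, Finset.card_univ,
    Fintype.card_fin, nsmul_eq_mul]
  field_simp

lemma NbrM_eq_filter (s : Fin (d ^ 2)) :
    NbrM M s = (Finset.univ.erase s).filter (fun t => gMat M s t = 0) := by
  ext t
  simp only [mem_NbrM, Finset.mem_filter, Finset.mem_erase, Finset.mem_univ, true_and,
    and_true]
  tauto

lemma Lq (h1 : ∀ j t, conj (M j t) * M j t = 1 / d) (hd : 1 ≤ d)
    (h3 : ∀ s t, s ≠ t → gMat M s t = 0 ∨ conj (gMat M s t) * gMat M s t = 1 / d)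
    (x : Fin (d ^ 2) → ℂ) :
    (∑ j, ∑ k, conj (YM M x j k) * YM M x j k) - (∑ j, conj (YM M x j j) * YM M x j j)
      = ∑ s, conj (x s) *
          ((1 - 1 / d) * x s - (1 / d) * ∑ t ∈ NbrM M s, x t) := by
  have hstep : ∀ j k : Fin d, conj (YM M x j k) * YM M x j k
      = ∑ s, ∑ t, (conj (x s) * x t) *
          (conj (M j s * conj (M k s)) * (M j t * conj (M k t))) := by
    intro j k
    simp only [YM, map_sum, map_mul]
    rw [Finset.sum_mul_sum]
    refine Finset.sum_congr rfl fun s _ => Finset.sum_congr rfl fun t _ => ?_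
    ring
  have hfull : (∑ j, ∑ k, conj (YM M x j k) * YM M x j k)
      = ∑ s, ∑ t, (conj (x s) * x t) * (gMat M s t * conj (gMat M s t)) := by
    calc ∑ j, ∑ k, conj (YM M x j k) * YM M x j k
        = ∑ j, ∑ s, ∑ t, ∑ k, (conj (x s) * x t) *
            (conj (M j s * conj (M k s)) * (M j t * conj (M k t))) := by
          refine Finset.sum_congr rfl fun j _ => ?_
          rw [Finset.sum_congr rfl fun k (_ : k ∈ Finset.univ) => hstep j k]
          exact comm3 _
      _ = ∑ s, ∑ t, ∑ j, ∑ k, (conj (x s) * x t) *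
            (conj (M j s * conj (M k s)) * (M j t * conj (M k t))) := comm3 _
      _ = ∑ s, ∑ t, (conj (x s) * x t) * (gMat M s t * conj (gMat M s t)) := by
          refine Finset.sum_congr rfl fun s _ => Finset.sum_congr rfl fun t _ => ?_
          simp only [← Finset.mul_sum]
          rw [L_factor M s t]
  have hdiag : (∑ j, conj (YM M x j j) * YM M x j j)
      = ∑ s, ∑ t, (conj (x s) * x t) * (1 / d) := by
    calc ∑ j, conj (YM M x j j) * YM M x j j
        = ∑ j, ∑ s, ∑ t, (conj (x s) * x t) *
            (conj (M j s * conj (M j s)) * (M j t * conj (M j t))) := by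
          exact Finset.sum_congr rfl fun j _ => hstep j j
      _ = ∑ s, ∑ t, ∑ j, (conj (x s) * x t) *
            (conj (M j s * conj (M j s)) * (M j t * conj (M j t))) := comm3 _
      _ = ∑ s, ∑ t, (conj (x s) * x t) * (1 / d) := by
          refine Finset.sum_congr rfl fun s _ => Finset.sum_congr rfl fun t _ => ?_
          simp only [← Finset.mul_sum]
          rw [L_diag M h1 hd s t]
  rw [hfull, hdiag, ← Finset.sum_sub_distrib]
  refine Finset.sum_congr rfl fun s _ => ?_
  rw [← Finset.sum_sub_distrib]
  have hsplit : ∀ t, (conj (x s) * x t) * (gMat M s t * conj (gMat M s t))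
      - (conj (x s) * x t) * (1 / d)
      = (conj (x s) * x t) * (gMat M s t * conj (gMat M s t) - 1 / d) := fun t => by ring
  rw [Finset.sum_congr rfl fun t _ => hsplit t]
  rw [← Finset.add_sum_erase _ _ (Finset.mem_univ s)]
  have hself : (conj (x s) * x s) * (gMat M s s * conj (gMat M s s) - 1 / d)
      = conj (x s) * ((1 - 1 / (d : ℂ)) * x s) := by
    rw [gMat_self M h1 hd s]
    simp only [map_one, mul_one]
    ring
  have herase : ∑ t ∈ Finset.univ.erase s,
      (conj (x s) * x t) * (gMat M s t * conj (gMat M s t) - 1 / d)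
      = ∑ t ∈ Finset.univ.erase s,
        (if gMat M s t = 0 then (conj (x s) * x t) * (-(1 / d)) else 0) := by
    refine Finset.sum_congr rfl fun t ht => ?_
    have hts : s ≠ t := fun h => (Finset.mem_erase.1 ht).1 h.symm
    by_cases hg : gMat M s t = 0
    · rw [if_pos hg, hg]
      ring
    · rw [if_neg hg]
      rcases h3 s t hts with h | h
      · exact absurd h hg
      · have hgg : gMat M s t * conj (gMat M s t) = 1 / d := by rw [mul_comm]; exact h
        rw [hgg]
        ring
  rw [hself, herase, ← Finset.sum_filter, ← NbrM_eq_filter]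
  have hfin : ∑ t ∈ NbrM M s, (conj (x s) * x t) * (-(1 / (d : ℂ)))
      = - (conj (x s) * ((1 / (d : ℂ)) * ∑ t ∈ NbrM M s, x t)) := by
    rw [Finset.mul_sum, Finset.mul_sum, ← Finset.sum_neg_distrib]
    exact Finset.sum_congr rfl fun t _ => by ring
  rw [hfin]
  ring

end Quadratic

section KK

variable (M : Fin d → Fin (d ^ 2) → ℂ)

lemma offdiag_norm (Y : Fin d → Fin d → ℂ) :
    (∑ j, ∑ k, conj (Y j k) * Y j k) - (∑ j, conj (Y j j) * Y j j)
      = ((∑ j, ∑ k ∈ Finset.univ.erase j, Complex.normSq (Y j k) : ℝ) : ℂ) := by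
  push_cast
  rw [← Finset.sum_sub_distrib]
  refine Finset.sum_congr rfl fun j _ => ?_
  rw [← Finset.add_sum_erase _ (fun k => conj (Y j k) * Y j k) (Finset.mem_univ j)]
  rw [add_sub_cancel_left]
  refine Finset.sum_congr rfl fun k _ => ?_
  rw [Complex.normSq_eq_conj_mul_self]

lemma inK_of_offdiag_zero {x : Fin (d ^ 2) → ℂ}
    (h : (∑ j, ∑ k ∈ Finset.univ.erase j, Complex.normSq (YM M x j k)) = 0) :
    inK M x := by
  intro j k hjk
  have hnn : ∀ j : Fin d, 0 ≤ ∑ k ∈ Finset.univ.erase j, Complex.normSq (YM M x j k) :=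
    fun j => Finset.sum_nonneg fun k _ => Complex.normSq_nonneg _
  have h2 := (Finset.sum_eq_zero_iff_of_nonneg (fun j _ => hnn j)).1 h j (Finset.mem_univ j)
  have h3 := (Finset.sum_eq_zero_iff_of_nonneg
    (fun k _ => Complex.normSq_nonneg _)).1 h2 k (Finset.mem_erase.2 ⟨hjk.symm, Finset.mem_univ k⟩)
  have h4 : YM M x j k = 0 := Complex.normSq_eq_zero.1 h3
  simpa [YM] using h4

lemma inK'_of_inK (h1 : ∀ j t, conj (M j t) * M j t = 1 / d) (hd : 1 ≤ d)
    (h3 : ∀ s t, s ≠ t → gMat M s t = 0 ∨ conj (gMat M s t) * gMat M s t = 1 / d)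
    {x : Fin (d ^ 2) → ℂ} (hx : inK M x) : inK' M x := by
  have hdC : (d : ℂ) ≠ 0 := by exact_mod_cast (Nat.pos_of_ne_zero (by omega)).ne'
  intro s
  have e1 : ∀ t, x t * (gMat M s t * conj (gMat M s t))
      = ∑ j, ∑ k, (conj (M j s) * M k s) * (x t * (M j t * conj (M k t))) := by
    intro t
    have hc : gMat M s t * conj (gMat M s t)
        = (∑ j, conj (M j s) * M j t) * (∑ k, M k s * conj (M k t)) := by
      congr 1
      simp only [gMat, map_sum, map_mul, Complex.conj_conj]
    rw [hc, Finset.sum_mul_sum, Finset.mul_sum]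
    refine Finset.sum_congr rfl fun j _ => ?_
    rw [Finset.mul_sum]
    exact Finset.sum_congr rfl fun k _ => by ring
  have way1 : (∑ t, x t * (gMat M s t * conj (gMat M s t))) = (1 / d) * ∑ t, x t := by
    rw [Finset.sum_congr rfl fun t _ => e1 t, comm3]
    have hinner : ∀ j : Fin d, (∑ k, ∑ t, (conj (M j s) * M k s) * (x t * (M j t * conj (M k t))))
        = (1 / d) * ((1 / d) * ∑ t, x t) := by
      intro j
      rw [Finset.sum_eq_single j]
      · have : ∀ t, (conj (M j s) * M j s) * (x t * (M j t * conj (M j t)))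
            = (1 / d) * (x t * (1 / d)) := by
          intro t
          have e2 : M j t * conj (M j t) = 1 / d := by rw [mul_comm]; exact h1 j t
          rw [h1 j s, e2]
        rw [Finset.sum_congr rfl fun t _ => this t, ← Finset.mul_sum, ← Finset.sum_mul]
        ring
      · intro k _ hkj
        rw [← Finset.mul_sum]
        have : (∑ t, x t * (M j t * conj (M k t))) = 0 := hx j k (fun h => hkj h.symm)
        rw [this, mul_zero]
      · intro h
        exact absurd (Finset.mem_univ j) h
    rw [Finset.sum_congr rfl fun j _ => hinner j, Finset.sum_const, Finset.card_univ,
      Fintype.card_fin, nsmul_eq_mul]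
    field_simp
  have way2 : (∑ t, x t * (gMat M s t * conj (gMat M s t)))
      = x s + (1 / d) * ((∑ t, x t) - x s - ∑ t ∈ NbrM M s, x t) := by
    rw [← Finset.add_sum_erase _ _ (Finset.mem_univ s), gMat_self M h1 hd s]
    have herase : ∑ t ∈ Finset.univ.erase s, x t * (gMat M s t * conj (gMat M s t))
        = ∑ t ∈ Finset.univ.erase s, (if gMat M s t = 0 then 0 else x t * (1 / d)) := by
      refine Finset.sum_congr rfl fun t ht => ?_
      have hts : s ≠ t := fun h => (Finset.mem_erase.1 ht).1 h.symm
      by_cases hg : gMat M s t = 0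
      · rw [if_pos hg, hg]
        ring
      · rw [if_neg hg]
        rcases h3 s t hts with h | h
        · exact absurd h hg
        · have hgg : gMat M s t * conj (gMat M s t) = 1 / d := by rw [mul_comm]; exact h
          rw [hgg]
    rw [herase]
    have hsplit := Finset.sum_filter_add_sum_filter_not (Finset.univ.erase s)
      (fun t => gMat M s t = 0) (fun t => (if gMat M s t = 0 then 0 else x t * (1 / (d : ℂ))))
    have hz : ∑ t ∈ (Finset.univ.erase s).filter (fun t => gMat M s t = 0),
        (if gMat M s t = 0 then 0 else x t * (1 / (d : ℂ))) = 0 := by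
      refine Finset.sum_eq_zero fun t ht => ?_
      rw [if_pos (Finset.mem_filter.1 ht).2]
    have hnz : ∑ t ∈ (Finset.univ.erase s).filter (fun t => ¬ gMat M s t = 0),
        (if gMat M s t = 0 then 0 else x t * (1 / (d : ℂ)))
        = (∑ t ∈ (Finset.univ.erase s).filter (fun t => ¬ gMat M s t = 0), x t) * (1 / d) := by
      rw [Finset.sum_mul]
      refine Finset.sum_congr rfl fun t ht => ?_
      rw [if_neg (Finset.mem_filter.1 ht).2]
    have hxsplit := Finset.sum_filter_add_sum_filter_not (Finset.univ.erase s)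
      (fun t => gMat M s t = 0) x
    have hNbr : (Finset.univ.erase s).filter (fun t => gMat M s t = 0) = NbrM M s :=
      (NbrM_eq_filter M s).symm
    have hxer : ∑ t ∈ Finset.univ.erase s, x t = (∑ t, x t) - x s := by
      rw [← Finset.add_sum_erase _ x (Finset.mem_univ s)]
      ring
    rw [← hsplit, hz, hnz, zero_add]
    have : ∑ t ∈ (Finset.univ.erase s).filter (fun t => ¬gMat M s t = 0), x t
        = ((∑ t, x t) - x s) - ∑ t ∈ NbrM M s, x t := by
      rw [← hxer, ← hxsplit, hNbr]
      ring
    rw [this]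
    simp only [map_one, mul_one]
    ring
  have hcomb : x s + (1 / (d : ℂ)) * ((∑ t, x t) - x s - ∑ t ∈ NbrM M s, x t)
      = (1 / d) * ∑ t, x t := by rw [← way2, way1]
  field_simp at hcomb
  linear_combination hcomb

lemma inK_of_inK' (h1 : ∀ j t, conj (M j t) * M j t = 1 / d) (hd : 1 ≤ d)
    (h3 : ∀ s t, s ≠ t → gMat M s t = 0 ∨ conj (gMat M s t) * gMat M s t = 1 / d)
    {x : Fin (d ^ 2) → ℂ} (hx : inK' M x) : inK M x := by
  have hdC : (d : ℂ) ≠ 0 := by exact_mod_cast (Nat.pos_of_ne_zero (by omega)).ne'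
  have hLq := Lq M h1 hd h3 x
  have hR : ∑ s, conj (x s) * ((1 - 1 / (d : ℂ)) * x s - (1 / d) * ∑ t ∈ NbrM M s, x t) = 0 := by
    refine Finset.sum_eq_zero fun s _ => ?_
    rw [← hx s]
    have : (1 - 1 / (d : ℂ)) * x s - 1 / (d : ℂ) * (((d : ℂ) - 1) * x s) = 0 := by
      field_simp
      ring
    rw [this, mul_zero]
  rw [hR, offdiag_norm] at hLq
  exact inK_of_offdiag_zero M (by exact_mod_cast hLq)

lemma inK'R_iff_coe {y : Fin (d ^ 2) → ℝ} :
    inK' M (fun t => (y t : ℂ)) ↔ inK'R M y := by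
  have hcast : ∀ s, (((d : ℂ) - 1) * ((y s : ℝ) : ℂ) = ∑ t ∈ NbrM M s, ((y t : ℝ) : ℂ))
      ↔ (((d : ℝ) - 1) * y s = ∑ t ∈ NbrM M s, y t) := by
    intro s
    rw [show ((d : ℂ) - 1) = (((d : ℝ) - 1 : ℝ) : ℂ) by push_cast; ring,
      ← Complex.ofReal_mul, ← Complex.ofReal_sum, Complex.ofReal_inj]
  constructor <;> intro h s
  · exact (hcast s).1 (h s)
  · exact (hcast s).2 (h s)

lemma absK (h1 : ∀ j t, conj (M j t) * M j t = 1 / d) (hd : 1 ≤ d)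
    (h3 : ∀ s t, s ≠ t → gMat M s t = 0 ∨ conj (gMat M s t) * gMat M s t = 1 / d)
    {x : Fin (d ^ 2) → ℂ} (hx : inK M x) :
    inK'R M (fun t => ‖x t‖) := by
  have hdR : (0 : ℝ) < d := by exact_mod_cast Nat.pos_of_ne_zero (by omega)
  have hx' := inK'_of_inK M h1 hd h3 hx
  set y : Fin (d ^ 2) → ℂ := fun t => ((‖x t‖ : ℝ) : ℂ) with hy
  have hpt : ∀ s, ((d : ℝ) - 1) * ‖x s‖ ≤ ∑ t ∈ NbrM M s, ‖x t‖ := by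
    intro s
    have h := hx' s
    have habs : ‖((d : ℂ) - 1) * x s‖ = ((d : ℝ) - 1) * ‖x s‖ := by
      rw [norm_mul]
      congr 1
      rw [show ((d : ℂ) - 1) = (((d : ℝ) - 1 : ℝ) : ℂ) by push_cast; ring, Complex.norm_real, Real.norm_eq_abs,
        abs_of_nonneg (by linarith [show (1:ℝ) ≤ d by exact_mod_cast hd])]
    calc ((d : ℝ) - 1) * ‖x s‖ = ‖∑ t ∈ NbrM M s, x t‖ := by
          rw [← habs, h]
      _ ≤ ∑ t ∈ NbrM M s, ‖x t‖ := norm_sum_le _ _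
  have hLq := Lq M h1 hd h3 y
  set wR : ℝ := ∑ s, (‖x s‖) *
      ((1 - 1 / d) * ‖x s‖ - (1 / d) * ∑ t ∈ NbrM M s, ‖x t‖) with hwR
  have hcast : ∑ s, conj (y s) * ((1 - 1 / (d : ℂ)) * y s - (1 / d) * ∑ t ∈ NbrM M s, y t)
      = (wR : ℂ) := by
    rw [hwR]
    push_cast
    refine Finset.sum_congr rfl fun s _ => ?_
    rw [hy]
    simp only [Complex.conj_ofReal]
  have hwneg : wR ≤ 0 := by
    rw [hwR]
    refine Finset.sum_nonpos fun s _ => ?_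
    have ha : (0 : ℝ) ≤ ‖x s‖ := norm_nonneg _
    have hbr : (1 - 1 / (d : ℝ)) * ‖x s‖
        - (1 / d) * ∑ t ∈ NbrM M s, ‖x t‖ ≤ 0 := by
      have h2 := hpt s
      have h3' : (0 : ℝ) < 1 / d := by positivity
      have : (1 - 1 / (d : ℝ)) * ‖x s‖ = (1 / d) * (((d : ℝ) - 1) * ‖x s‖) := by
        field_simp
      rw [this]
      nlinarith
    exact mul_nonpos_of_nonneg_of_nonpos ha hbr
  rw [hcast, offdiag_norm] at hLq
  have hAR : (∑ j, ∑ k ∈ Finset.univ.erase j, Complex.normSq (YM M y j k)) = wR := by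
    exact_mod_cast hLq
  have hARnn : 0 ≤ ∑ j, ∑ k ∈ Finset.univ.erase j, Complex.normSq (YM M y j k) :=
    Finset.sum_nonneg fun j _ => Finset.sum_nonneg fun k _ => Complex.normSq_nonneg _
  have hzero : (∑ j, ∑ k ∈ Finset.univ.erase j, Complex.normSq (YM M y j k)) = 0 :=
    le_antisymm (hAR ▸ hwneg) hARnn
  have hyK : inK M y := inK_of_offdiag_zero M hzero
  exact (inK'R_iff_coe M).1 (inK'_of_inK M h1 hd h3 hyK)

end KK

section Dim

variable (M : Fin d → Fin (d ^ 2) → ℂ)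

/-- The linear map whose kernel is `K`. -/
def PhiM : (Fin (d ^ 2) → ℂ) →ₗ[ℂ] ({p : Fin d × Fin d // p.1 ≠ p.2} → ℂ) where
  toFun x := fun p => ∑ t, x t * (M p.1.1 t * conj (M p.1.2 t))
  map_add' x y := by
    funext p
    simp only [Pi.add_apply, add_mul, Finset.sum_add_distrib]
  map_smul' c x := by
    funext p
    simp only [Pi.smul_apply, smul_eq_mul, RingHom.id_apply]
    rw [Finset.mul_sum]
    exact Finset.sum_congr rfl fun t _ => (mul_assoc _ _ _)

lemma inK_iff_ker {x : Fin (d ^ 2) → ℂ} : x ∈ LinearMap.ker (PhiM M) ↔ inK M x := by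
  rw [LinearMap.mem_ker]
  constructor
  · intro h j k hjk
    exact congrFun h ⟨(j, k), hjk⟩
  · intro h
    funext p
    exact h p.1.1 p.1.2 p.2

lemma card_offdiag : Fintype.card {p : Fin d × Fin d // p.1 ≠ p.2} = d ^ 2 - d := by
  have e : {p : Fin d × Fin d // p.1 = p.2} ≃ Fin d :=
    { toFun := fun p => p.1.1
      invFun := fun j => ⟨(j, j), rfl⟩
      left_inv := by rintro ⟨⟨a, b⟩, h⟩; cases h; rfl
      right_inv := fun j => rfl }
  have h1 : Fintype.card {p : Fin d × Fin d // ¬ p.1 = p.2}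
      = Fintype.card (Fin d × Fin d) - Fintype.card {p : Fin d × Fin d // p.1 = p.2} :=
    Fintype.card_subtype_compl _
  have h2 : Fintype.card {p : Fin d × Fin d // p.1 = p.2} = d := by
    rw [Fintype.card_congr e, Fintype.card_fin]
  have h3 : Fintype.card (Fin d × Fin d) = d ^ 2 := by
    rw [Fintype.card_prod, Fintype.card_fin, sq]
  exact h1.trans (by rw [h2, h3])

lemma ker_dim_ge (hd : 1 ≤ d) : d ≤ Module.finrank ℂ (LinearMap.ker (PhiM M)) := by
  have hrn := LinearMap.finrank_range_add_finrank_ker (PhiM M)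
  have hdom : Module.finrank ℂ (Fin (d ^ 2) → ℂ) = d ^ 2 := by
    rw [Module.finrank_fintype_fun_eq_card, Fintype.card_fin]
  have hcod : Module.finrank ℂ ({p : Fin d × Fin d // p.1 ≠ p.2} → ℂ) = d ^ 2 - d := by
    rw [Module.finrank_fintype_fun_eq_card, card_offdiag]
  have hrange : Module.finrank ℂ (LinearMap.range (PhiM M)) ≤ d ^ 2 - d := by
    rw [← hcod]
    exact Submodule.finrank_le _
  have hdd : d ≤ d ^ 2 := by nlinarith
  omega

end Dim

section Graph

variable (M : Fin d → Fin (d ^ 2) → ℂ)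

lemma zero_prop {y : Fin (d ^ 2) → ℝ} (hy : inK'R M y) (hy0 : ∀ t, 0 ≤ y t)
    {s : Fin (d ^ 2)} (hs : y s = 0) : ∀ t ∈ NbrM M s, y t = 0 := by
  have h := hy s
  rw [hs, mul_zero] at h
  exact fun t ht => (Finset.sum_eq_zero_iff_of_nonneg (fun t _ => hy0 t)).1 h.symm t ht

lemma pos_prop {y : Fin (d ^ 2) → ℝ} (hy : inK'R M y) (hy0 : ∀ t, 0 ≤ y t)
    {s t : Fin (d ^ 2)} (hs : 0 < y s) (hr : ReachM M s t) : 0 < y t := by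
  induction hr with
  | refl => exact hs
  | tail hreach hadj ih =>
    rename_i b c
    by_contra hc
    have hc0 : y c = 0 := le_antisymm (not_lt.1 hc) (hy0 c)
    have hb : b ∈ NbrM M c := by
      rw [mem_NbrM]
      exact (AdjM_symm M hadj : AdjM M c b)
    exact (ne_of_gt ih) (zero_prop M hy hy0 hc0 b hb)

lemma restrictR {y : Fin (d ^ 2) → ℝ} (hy : inK'R M y) (s : Fin (d ^ 2)) :
    inK'R M (fun t => if t ∈ compM M s then y t else 0) := by
  intro u
  beta_reduce
  by_cases hu : u ∈ compM M s
  · rw [if_pos hu]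
    have hcong : ∀ t ∈ NbrM M u, (if t ∈ compM M s then y t else 0) = y t := fun t ht =>
      if_pos (NbrM_mem_trans M hu ht)
    rw [Finset.sum_congr rfl hcong]
    exact hy u
  · rw [if_neg hu, mul_zero]
    symm
    refine Finset.sum_eq_zero fun t ht => ?_
    rw [if_neg]
    intro htc
    exact hu (NbrM_mem_trans M htc (by
      rw [mem_NbrM]
      exact (AdjM_symm M ((mem_NbrM M).1 ht) : AdjM M t u)))

lemma restrictC {x : Fin (d ^ 2) → ℂ} (hx : inK' M x) (s : Fin (d ^ 2)) :
    inK' M (fun t => if t ∈ compM M s then x t else 0) := by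
  intro u
  beta_reduce
  by_cases hu : u ∈ compM M s
  · rw [if_pos hu]
    have hcong : ∀ t ∈ NbrM M u, (if t ∈ compM M s then x t else 0) = x t := fun t ht =>
      if_pos (NbrM_mem_trans M hu ht)
    rw [Finset.sum_congr rfl hcong]
    exact hx u
  · rw [if_neg hu, mul_zero]
    symm
    refine Finset.sum_eq_zero fun t ht => ?_
    rw [if_neg]
    intro htc
    exact hu (NbrM_mem_trans M htc (by
      rw [mem_NbrM]
      exact (AdjM_symm M ((mem_NbrM M).1 ht) : AdjM M t u)))

lemma comp_size_ge (hd : 1 ≤ d) {y : Fin (d ^ 2) → ℝ} (hy : inK'R M y)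
    (hy0 : ∀ t, 0 ≤ y t) {s : Fin (d ^ 2)} (hs : 0 < y s) : d ≤ (compM M s).card := by
  obtain ⟨v, hv, hvmax⟩ := Finset.exists_max_image (compM M s) y ⟨s, mem_compM_self M s⟩
  have hvpos : 0 < y v := pos_prop M hy hy0 hs ((mem_compM M).1 hv)
  have hNsub : NbrM M v ⊆ compM M s \ {v} := by
    have h1 := NbrM_subset_compM M v
    rw [compM_eq M ((mem_compM M).1 hv)]
    exact h1
  have hsum : ((d : ℝ) - 1) * y v ≤ (NbrM M v).card * y v := by
    rw [hy v]
    calc ∑ t ∈ NbrM M v, y t ≤ ∑ _t ∈ NbrM M v, y v := by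
          refine Finset.sum_le_sum fun t ht => ?_
          have : t ∈ compM M s := (Finset.mem_sdiff.1 (hNsub ht)).1
          exact hvmax t this
      _ = (NbrM M v).card * y v := by rw [Finset.sum_const, nsmul_eq_mul]
  have hcard : ((d : ℝ) - 1) ≤ (NbrM M v).card := le_of_mul_le_mul_right hsum hvpos
  have hcard' : d ≤ (NbrM M v).card + 1 := by
    have : ((d : ℝ)) ≤ ((NbrM M v).card + 1 : ℝ) := by linarith
    exact_mod_cast this
  have hle : (NbrM M v).card ≤ (compM M s).card - 1 := by
    have h2 : (compM M s \ {v}).card = (compM M s).card - 1 := by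
      rw [Finset.card_sdiff_of_subset (Finset.singleton_subset_iff.2 hv), Finset.card_singleton]
    exact h2 ▸ Finset.card_le_card hNsub
  have hpos : 1 ≤ (compM M s).card := Finset.card_pos.2 ⟨s, mem_compM_self M s⟩
  omega

end Graph

section Good

variable (M : Fin d → Fin (d ^ 2) → ℂ)

def goodM : Finset (Fin (d ^ 2)) :=
  Finset.univ.filter (fun s => ∃ y : Fin (d ^ 2) → ℝ, inK'R M y ∧ (∀ t, 0 ≤ y t) ∧ 0 < y s)

lemma mem_goodM {s : Fin (d ^ 2)} :
    s ∈ goodM M ↔ ∃ y : Fin (d ^ 2) → ℝ, inK'R M y ∧ (∀ t, 0 ≤ y t) ∧ 0 < y s := by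
  simp [goodM]

lemma goodM_witness {s : Fin (d ^ 2)} (hs : s ∈ goodM M) :
    ∃ y : Fin (d ^ 2) → ℝ, inK'R M y ∧ (∀ t, 0 ≤ y t) ∧ (∀ t, 0 < y t ↔ t ∈ compM M s) := by
  obtain ⟨y, hy, hy0, hys⟩ := (mem_goodM M).1 hs
  refine ⟨fun t => if t ∈ compM M s then y t else 0, restrictR M hy s, ?_, ?_⟩
  · intro t
    dsimp only
    split
    · exact hy0 t
    · exact le_refl 0
  · intro t
    dsimp only
    constructor
    · intro h
      by_contra hc
      rw [if_neg hc] at h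
      exact lt_irrefl 0 h
    · intro h
      rw [if_pos h]
      exact pos_prop M hy hy0 hys ((mem_compM M).1 h)

lemma goodM_comp_closed {s u : Fin (d ^ 2)} (hs : s ∈ goodM M) (hu : u ∈ compM M s) :
    u ∈ goodM M := by
  obtain ⟨y, hy, hy0, hiff⟩ := goodM_witness M hs
  exact (mem_goodM M).2 ⟨y, hy, hy0, (hiff u).2 hu⟩

lemma not_good_zero (h1 : ∀ j t, conj (M j t) * M j t = 1 / d) (hd : 1 ≤ d)
    (h3 : ∀ s t, s ≠ t → gMat M s t = 0 ∨ conj (gMat M s t) * gMat M s t = 1 / d)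
    {x : Fin (d ^ 2) → ℂ} (hx : inK M x) {s : Fin (d ^ 2)} (hs : s ∉ goodM M) : x s = 0 := by
  by_contra hc
  exact hs ((mem_goodM M).2 ⟨fun t => ‖x t‖, absK M h1 hd h3 hx,
    fun t => norm_nonneg _, norm_pos_iff.mpr hc⟩)

def repM (s : Fin (d ^ 2)) : Fin (d ^ 2) := (compM M s).min' ⟨s, mem_compM_self M s⟩

lemma repM_mem (s : Fin (d ^ 2)) : repM M s ∈ compM M s := Finset.min'_mem _ _

lemma repM_eq_of_comp_eq {s u : Fin (d ^ 2)} (h : compM M s = compM M u) :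
    repM M s = repM M u := by
  simp only [repM, h]

lemma compM_repM (s : Fin (d ^ 2)) : compM M (repM M s) = compM M s :=
  (compM_eq M ((mem_compM M).1 (repM_mem M s))).symm

lemma repM_idem (s : Fin (d ^ 2)) : repM M (repM M s) = repM M s :=
  repM_eq_of_comp_eq M (compM_repM M s)

lemma repM_eq_of_mem {s u : Fin (d ^ 2)} (hu : u ∈ compM M s) : repM M u = repM M s :=
  repM_eq_of_comp_eq M (compM_eq M ((mem_compM M).1 hu)).symm

end Good

section Classify

variable (M : Fin d → Fin (d ^ 2) → ℂ)

lemma classification (h1 : ∀ j t, conj (M j t) * M j t = 1 / d) (hd : 1 ≤ d)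
    (h3 : ∀ s t, s ≠ t → gMat M s t = 0 ∨ conj (gMat M s t) * gMat M s t = 1 / d) :
    ∀ s : Fin (d ^ 2), (compM M s).card = d ∧ NbrM M s = compM M s \ {s} := by
  classical
  have hex : ∀ s : Fin (d ^ 2), ∃ y : Fin (d ^ 2) → ℝ,
      s ∈ goodM M → (inK'R M y ∧ (∀ t, 0 ≤ y t) ∧ (∀ t, 0 < y t ↔ t ∈ compM M s)) := by
    intro s
    by_cases hs : s ∈ goodM M
    · obtain ⟨y, h⟩ := goodM_witness M hs
      exact ⟨y, fun _ => h⟩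
    · exact ⟨0, fun h => absurd h hs⟩
  choose Y hY using hex
  set R : Finset (Fin (d ^ 2)) := (goodM M).filter (fun s => repM M s = s) with hR
  set f : Fin (d ^ 2) → (Fin (d ^ 2) → ℂ) := fun m => (fun t => ((Y m t : ℝ) : ℂ)) with hf
  have hspan : (LinearMap.ker (PhiM M) : Submodule ℂ (Fin (d ^ 2) → ℂ)) ≤
      Submodule.span ℂ ((R.image f : Finset (Fin (d ^ 2) → ℂ)) : Set (Fin (d ^ 2) → ℂ)) := by
    intro x hxker
    have hx : inK M x := (inK_iff_ker M).1 hxker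
    have hxeq : x = ∑ m ∈ R, (x m / (Y m m : ℂ)) • f m := by
      funext t
      rw [Finset.sum_apply]
      by_cases ht : t ∈ goodM M
      · set m0 := repM M t with hm0
        have hm0good : m0 ∈ goodM M := goodM_comp_closed M ht (repM_mem M t)
        have hm0R : m0 ∈ R := Finset.mem_filter.2 ⟨hm0good, repM_idem M t⟩
        obtain ⟨hYK, hY0, hYiff⟩ := hY m0 hm0good
        have hYm0 : 0 < Y m0 m0 := (hYiff m0).2 (mem_compM_self M m0)
        have htm0 : t ∈ compM M m0 := by
          rw [hm0, compM_repM]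
          exact mem_compM_self M t
        have hzero : ∀ m ∈ R, m ≠ m0 → ((x m / (Y m m : ℂ)) • f m) t = 0 := by
          intro m hmR hmne
          obtain ⟨_, hY0m, hYiffm⟩ := hY m (Finset.mem_filter.1 hmR).1
          have hnot : ¬ t ∈ compM M m := by
            intro hmem
            apply hmne
            have e1 : repM M t = repM M m := repM_eq_of_mem M hmem
            calc m = repM M m := (Finset.mem_filter.1 hmR).2.symm
              _ = repM M t := e1.symm
              _ = m0 := hm0.symm
          have hYzero : Y m t = 0 := by
            rcases (hY0m t).lt_or_eq with h | h
            · exact absurd ((hYiffm t).1 h) hnot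
            · exact h.symm
          rw [Pi.smul_apply, smul_eq_mul, hf]
          simp only [hYzero, Complex.ofReal_zero, mul_zero]
        rw [Finset.sum_eq_single_of_mem m0 hm0R hzero]
        · have huniq : (Y m0 m0 : ℂ) * x t = x m0 * (Y m0 t : ℂ) := by
            set z : Fin (d ^ 2) → ℂ := fun u =>
              if u ∈ compM M m0 then (Y m0 m0 : ℂ) * x u - x m0 * (Y m0 u : ℂ) else 0 with hz
            have hYC : inK M (fun u => ((Y m0 u : ℝ) : ℂ)) :=
              inK_of_inK' M h1 hd h3 ((inK'R_iff_coe M).2 hYK)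
            have hcombo : inK' M (fun u => (Y m0 m0 : ℂ) * x u - x m0 * (Y m0 u : ℂ)) := by
              apply inK'_of_inK M h1 hd h3
              intro j k hjk
              have e1 := hx j k hjk
              have e2 := hYC j k hjk
              calc ∑ u, ((Y m0 m0 : ℂ) * x u - x m0 * (Y m0 u : ℂ)) * (M j u * conj (M k u))
                  = (Y m0 m0 : ℂ) * (∑ u, x u * (M j u * conj (M k u)))
                    - x m0 * (∑ u, (Y m0 u : ℂ) * (M j u * conj (M k u))) := by
                    rw [Finset.mul_sum, Finset.mul_sum, ← Finset.sum_sub_distrib]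
                    exact Finset.sum_congr rfl fun u _ => by ring
                _ = 0 := by
                    rw [e1, e2]
                    ring
            have hzK : inK M z := inK_of_inK' M h1 hd h3 (restrictC M hcombo m0)
            have hzm0 : z m0 = 0 := by
              rw [hz]
              simp only
              rw [if_pos (mem_compM_self M m0)]
              ring
            have hzt : z t = 0 := by
              by_contra hzc
              have habs := absK M h1 hd h3 hzK
              have hpos : 0 < ‖z t‖ := norm_pos_iff.mpr hzc
              have hreach : ReachM M t m0 := ReachM_symm M ((mem_compM M).1 htm0)
              have hfin := pos_prop M habs (fun u => norm_nonneg _) hpos hreach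
              rw [hzm0] at hfin
              simp at hfin
            rw [hz] at hzt
            simp only at hzt
            rw [if_pos htm0] at hzt
            exact sub_eq_zero.1 hzt
          have hYm0C : (Y m0 m0 : ℂ) ≠ 0 := by exact_mod_cast hYm0.ne'
          rw [Pi.smul_apply, smul_eq_mul, hf]
          field_simp
          linear_combination huniq
      · rw [not_good_zero M h1 hd h3 hx ht]
        symm
        refine Finset.sum_eq_zero fun m hmR => ?_
        have hmgood := (Finset.mem_filter.1 hmR).1
        obtain ⟨_, hY0m, hYiffm⟩ := hY m hmgood
        have hYzero : Y m t = 0 := by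
          rcases (hY0m t).lt_or_eq with h | h
          · exact absurd (goodM_comp_closed M hmgood ((hYiffm t).1 h)) ht
          · exact h.symm
        rw [Pi.smul_apply, smul_eq_mul, hf]
        simp only [hYzero, Complex.ofReal_zero, mul_zero]
    rw [hxeq]
    exact Submodule.sum_mem _ fun m hm => Submodule.smul_mem _ _
      (Submodule.subset_span (Finset.mem_coe.2 (Finset.mem_image_of_mem _ hm)))
  have hdim : d ≤ R.card := by
    have hk := ker_dim_ge M hd
    have h2' := Submodule.finrank_mono hspan
    have h3' : Module.finrank ℂ (Submodule.span ℂ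
        ((R.image f : Finset (Fin (d ^ 2) → ℂ)) : Set (Fin (d ^ 2) → ℂ))) ≤ (R.image f).card :=
      finrank_span_finset_le_card (R.image f)
    have h4' : (R.image f).card ≤ R.card := Finset.card_image_le
    omega
  have hdisj : ∀ m ∈ R, ∀ m' ∈ R, m ≠ m' → Disjoint (compM M m) (compM M m') := by
    intro m hm m' hm' hne
    rw [Finset.disjoint_left]
    intro u hu hu'
    apply hne
    have e1 : repM M u = repM M m := repM_eq_of_mem M hu
    have e2 : repM M u = repM M m' := repM_eq_of_mem M hu'
    rw [← (Finset.mem_filter.1 hm).2, ← (Finset.mem_filter.1 hm').2, ← e1, ← e2]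
  set U : Finset (Fin (d ^ 2)) := R.biUnion (fun m => compM M m) with hU
  have hcardU : U.card = ∑ m ∈ R, (compM M m).card := Finset.card_biUnion hdisj
  have hterm : ∀ m ∈ R, d ≤ (compM M m).card := by
    intro m hm
    obtain ⟨hYK, hY0, hYiff⟩ := hY m (Finset.mem_filter.1 hm).1
    exact comp_size_ge M hd hYK hY0 ((hYiff m).2 (mem_compM_self M m))
  have hsum_ge : R.card * d ≤ ∑ m ∈ R, (compM M m).card := by
    calc R.card * d = ∑ _m ∈ R, d := by rw [Finset.sum_const, smul_eq_mul]
      _ ≤ _ := Finset.sum_le_sum hterm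
  have hUle : U.card ≤ d ^ 2 := by
    simpa using Finset.card_le_univ U
  have hRd : R.card = d := by
    have h2' : R.card * d ≤ d * d := by
      have : (d : ℕ) * d = d ^ 2 := (sq d).symm
      omega
    have h3' : R.card ≤ d := Nat.le_of_mul_le_mul_right h2' (by omega)
    omega
  have hcomp_eq : ∀ m ∈ R, (compM M m).card = d := by
    intro m0 hm0
    by_contra hne
    have hgt : d < (compM M m0).card := lt_of_le_of_ne (hterm m0 hm0) (Ne.symm hne)
    have hlt : R.card * d < ∑ m ∈ R, (compM M m).card := by
      calc R.card * d = ∑ _m ∈ R, d := by rw [Finset.sum_const, smul_eq_mul]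
        _ < _ := Finset.sum_lt_sum hterm ⟨m0, hm0, hgt⟩
    have hsq : (d : ℕ) * d = d ^ 2 := (sq d).symm
    have hcc : R.card * d = d * d := by rw [hRd]
    omega
  have hUuniv : U = Finset.univ := by
    apply Finset.eq_univ_of_card
    rw [Fintype.card_fin, hcardU]
    calc ∑ m ∈ R, (compM M m).card = ∑ _m ∈ R, d := Finset.sum_congr rfl hcomp_eq
      _ = R.card * d := by rw [Finset.sum_const, smul_eq_mul]
      _ = d ^ 2 := by rw [hRd, sq]
  intro s
  have hsU : s ∈ U := hUuniv ▸ Finset.mem_univ s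
  obtain ⟨m, hmR, hsm⟩ := Finset.mem_biUnion.1 hsU
  have hcompeq : compM M s = compM M m := (compM_eq M ((mem_compM M).1 hsm)).symm
  have hcard : (compM M s).card = d := by rw [hcompeq]; exact hcomp_eq m hmR
  have hsgood : s ∈ goodM M := goodM_comp_closed M (Finset.mem_filter.1 hmR).1 hsm
  obtain ⟨hYK, hY0, hYiff⟩ := hY s hsgood
  obtain ⟨v, hv, hvmax⟩ := Finset.exists_max_image (compM M s) (Y s) ⟨s, mem_compM_self M s⟩
  have hvpos : 0 < Y s v := (hYiff v).2 hv
  have hNsubv : NbrM M v ⊆ compM M s \ {v} := by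
    have hn := NbrM_subset_compM M v
    rw [compM_eq M ((mem_compM M).1 hv)]
    exact hn
  have hcards : (compM M s \ {v}).card = d - 1 := by
    rw [Finset.card_sdiff_of_subset (Finset.singleton_subset_iff.2 hv), Finset.card_singleton, hcard]
  have hconst : ∀ u ∈ compM M s, Y s u = Y s v := by
    have e1 : ((d : ℝ) - 1) * Y s v = ∑ t ∈ NbrM M v, Y s t := hYK v
    have e2 : ∑ t ∈ NbrM M v, Y s t ≤ ∑ t ∈ compM M s \ {v}, Y s t :=
      Finset.sum_le_sum_of_subset_of_nonneg hNsubv (fun t _ _ => hY0 t)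
    have e3 : ∑ t ∈ compM M s \ {v}, Y s t ≤ ∑ t ∈ compM M s \ {v}, Y s v :=
      Finset.sum_le_sum fun t htm => hvmax t (Finset.mem_sdiff.1 htm).1
    have e4 : ∑ _t ∈ compM M s \ {v}, Y s v = ((d : ℝ) - 1) * Y s v := by
      rw [Finset.sum_const, hcards, nsmul_eq_mul]
      congr 1
      have : (1 : ℕ) ≤ d := hd
      push_cast [Nat.cast_sub this]
      ring
    have e5 : ∑ t ∈ compM M s \ {v}, (Y s v - Y s t) = 0 := by
      rw [Finset.sum_sub_distrib]
      have := e4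
      linarith
    have e6 := (Finset.sum_eq_zero_iff_of_nonneg
      (fun t htm => sub_nonneg.2 (hvmax t (Finset.mem_sdiff.1 htm).1))).1 e5
    intro u hu
    by_cases huv : u = v
    · rw [huv]
    · have h7 := e6 u (Finset.mem_sdiff.2 ⟨hu, by simpa using huv⟩)
      linarith [sub_eq_zero.1 h7]
  have hNs : NbrM M s = compM M s \ {s} := by
    have hNsub : NbrM M s ⊆ compM M s \ {s} := NbrM_subset_compM M s
    have hYss : Y s s = Y s v := hconst s (mem_compM_self M s)
    have hNconst : ∀ t ∈ NbrM M s, Y s t = Y s v := by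
      intro t ht
      have : t ∈ compM M s := (Finset.mem_sdiff.1 (hNsub ht)).1
      exact hconst t this
    have heig : ((d : ℝ) - 1) * Y s v = (NbrM M s).card * Y s v := by
      calc ((d : ℝ) - 1) * Y s v = ((d : ℝ) - 1) * Y s s := by rw [hYss]
        _ = ∑ t ∈ NbrM M s, Y s t := hYK s
        _ = ∑ _t ∈ NbrM M s, Y s v := Finset.sum_congr rfl hNconst
        _ = (NbrM M s).card * Y s v := by rw [Finset.sum_const, nsmul_eq_mul]
    have hcardN : ((d : ℝ) - 1) = ((NbrM M s).card : ℝ) :=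
      mul_right_cancel₀ hvpos.ne' heig
    have hcardN' : (NbrM M s).card = d - 1 := by
      have h8 : ((NbrM M s).card : ℝ) + 1 = (d : ℝ) := by linarith
      have h9 : ((NbrM M s).card + 1 : ℕ) = d := by exact_mod_cast h8
      omega
    have hcardss : (compM M s \ {s}).card = d - 1 := by
      rw [Finset.card_sdiff_of_subset (Finset.singleton_subset_iff.2 (mem_compM_self M s)),
        Finset.card_singleton, hcard]
    exact Finset.eq_of_subset_of_card_le hNsub (by omega)
  exact ⟨hcard, hNs⟩

end Classify

section ONB
open Matrix

variable (M : Fin d → Fin (d ^ 2) → ℂ)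

lemma one_inK (h1 : ∀ j t, conj (M j t) * M j t = 1 / d) (hd : 1 ≤ d)
    (h3 : ∀ s t, s ≠ t → gMat M s t = 0 ∨ conj (gMat M s t) * gMat M s t = 1 / d) :
    inK M (fun _ => (1 : ℂ)) := by
  apply inK_of_inK' M h1 hd h3
  intro s
  obtain ⟨hcard, hN⟩ := classification M h1 hd h3 s
  have hc : (NbrM M s).card = d - 1 := by
    rw [hN, Finset.card_sdiff_of_subset (Finset.singleton_subset_iff.2 (mem_compM_self M s)),
      Finset.card_singleton, hcard]
  rw [Finset.sum_const, hc, nsmul_eq_mul, mul_one, mul_one]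
  have h1d : (1 : ℕ) ≤ d := hd
  push_cast [Nat.cast_sub h1d]
  ring

lemma D1 (h1 : ∀ j t, conj (M j t) * M j t = 1 / d) (hd : 1 ≤ d)
    (h3 : ∀ s t, s ≠ t → gMat M s t = 0 ∨ conj (gMat M s t) * gMat M s t = 1 / d)
    {j k : Fin d} (hjk : j ≠ k) : ∑ t, M j t * conj (M k t) = 0 := by
  have h := one_inK M h1 hd h3 j k hjk
  simpa using h

lemma comp_ONB (h1 : ∀ j t, conj (M j t) * M j t = 1 / d) (hd : 1 ≤ d)
    (h3 : ∀ s t, s ≠ t → gMat M s t = 0 ∨ conj (gMat M s t) * gMat M s t = 1 / d)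
    (s : Fin (d ^ 2)) (a b : Fin d) :
    ∑ t ∈ compM M s, M a t * conj (M b t) = if a = b then 1 else 0 := by
  obtain ⟨hcard, _⟩ := classification M h1 hd h3 s
  have horthc : ∀ t ∈ compM M s, ∀ t' ∈ compM M s, t ≠ t' → gMat M t t' = 0 := by
    intro t ht t' ht' hne
    obtain ⟨_, hNt⟩ := classification M h1 hd h3 t
    have hcc : compM M t = compM M s := (compM_eq M ((mem_compM M).1 ht)).symm
    have hmem : t' ∈ NbrM M t := by
      rw [hNt, hcc]
      exact Finset.mem_sdiff.2 ⟨ht', by simpa using hne.symm⟩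
    exact ((mem_NbrM M).1 hmem).2
  have hcards : Fintype.card {x // x ∈ compM M s} = d := by
    rw [Fintype.card_coe]
    exact hcard
  let e : {x // x ∈ compM M s} ≃ Fin d := Fintype.equivFinOfCardEq hcards
  set V : Matrix (Fin d) (Fin d) ℂ :=
    Matrix.of (fun a i => M a ((e.symm i) : Fin (d ^ 2))) with hV
  have hVV : Vᴴ * V = 1 := by
    ext i i'
    rw [Matrix.mul_apply, Matrix.one_apply]
    simp only [Matrix.conjTranspose_apply, hV, Matrix.of_apply]
    by_cases hii : i = i'
    · subst hii
      rw [if_pos rfl]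
      exact gMat_self M h1 hd _
    · rw [if_neg hii]
      apply horthc _ (e.symm i).2 _ (e.symm i').2
      intro hcontra
      exact hii (by
        have : e.symm i = e.symm i' := Subtype.ext hcontra
        exact e.symm.injective this)
  have hVV2 : V * Vᴴ = 1 := mul_eq_one_comm.1 hVV
  have h2 : ∑ i, M a ((e.symm i) : Fin (d ^ 2)) * conj (M b ((e.symm i) : Fin (d ^ 2)))
      = if a = b then 1 else 0 := by
    have h3' : (V * Vᴴ) a b = (1 : Matrix (Fin d) (Fin d) ℂ) a b := by rw [hVV2]
    rw [Matrix.mul_apply, Matrix.one_apply] at h3'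
    simpa only [Matrix.conjTranspose_apply, hV, Matrix.of_apply, ← starRingEnd_apply] using h3'
  calc ∑ t ∈ compM M s, M a t * conj (M b t)
      = ∑ u : {x // x ∈ compM M s}, M a (u : Fin (d ^ 2)) * conj (M b (u : Fin (d ^ 2))) :=
        (Finset.sum_coe_sort _ _).symm
    _ = ∑ i, M a ((e.symm i) : Fin (d ^ 2)) * conj (M b ((e.symm i) : Fin (d ^ 2))) :=
        (Equiv.sum_comp e.symm
          (fun u : {x // x ∈ compM M s} => M a (u : Fin (d ^ 2)) * conj (M b (u : Fin (d ^ 2))))).symm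
    _ = if a = b then 1 else 0 := h2

end ONB

section Frame

variable (M : Fin d → Fin (d ^ 2) → ℂ)

def aM (t : Fin (d ^ 2)) : Fin d × Fin d → ℂ :=
  fun p => M p.1 t * conj (M p.2 t) - (if p.1 = p.2 then (1 : ℂ) / d else 0)

def deltaM (d : ℕ) (j : Fin d) : Fin d × Fin d → ℂ := fun p => if p = (j, j) then 1 else 0

lemma conj_invd : conj ((1 : ℂ) / d) = 1 / d := by
  simp

lemma aM_diag (h1 : ∀ j t, conj (M j t) * M j t = 1 / d) (t : Fin (d ^ 2)) (j : Fin d) :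
    aM M t (j, j) = 0 := by
  have h := h1 j t
  rw [mul_comm] at h
  simp only [aM, h]
  simp

lemma IP_delta_delta (j k : Fin d) :
    ∑ p : Fin d × Fin d, conj (deltaM d j p) * deltaM d k p = if j = k then 1 else 0 := by
  have hterm : ∀ p : Fin d × Fin d,
      conj (deltaM d j p) * deltaM d k p = if p = (j, j) then deltaM d k p else 0 := by
    intro p
    simp only [deltaM]
    by_cases h : p = (j, j)
    · rw [if_pos h, if_pos h, map_one, one_mul]
    · rw [if_neg h, if_neg h, map_zero, zero_mul]
  rw [Finset.sum_congr rfl fun p _ => hterm p,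
    Finset.sum_ite_eq' Finset.univ ((j, j) : Fin d × Fin d) (deltaM d k),
    if_pos (Finset.mem_univ _)]
  simp only [deltaM, Prod.mk.injEq]
  by_cases hjk : j = k
  · subst hjk
    rw [if_pos ⟨rfl, rfl⟩, if_pos rfl]
  · rw [if_neg (fun h => hjk h.1), if_neg hjk]

lemma IP_delta_aM (h1 : ∀ j t, conj (M j t) * M j t = 1 / d) (j : Fin d) (t : Fin (d ^ 2)) :
    ∑ p : Fin d × Fin d, conj (deltaM d j p) * aM M t p = 0 := by
  have hterm : ∀ p : Fin d × Fin d,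
      conj (deltaM d j p) * aM M t p = if p = (j, j) then aM M t p else 0 := by
    intro p
    simp only [deltaM]
    by_cases h : p = (j, j)
    · rw [if_pos h, if_pos h, map_one, one_mul]
    · rw [if_neg h, if_neg h, map_zero, zero_mul]
  rw [Finset.sum_congr rfl fun p _ => hterm p,
    Finset.sum_ite_eq' Finset.univ ((j, j) : Fin d × Fin d) (aM M t),
    if_pos (Finset.mem_univ _), aM_diag M h1 t j]

lemma IP_aM_delta (h1 : ∀ j t, conj (M j t) * M j t = 1 / d) (t : Fin (d ^ 2)) (j : Fin d) :
    ∑ p : Fin d × Fin d, conj (aM M t p) * deltaM d j p = 0 := by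
  have hterm : ∀ p : Fin d × Fin d,
      conj (aM M t p) * deltaM d j p = if p = (j, j) then conj (aM M t p) else 0 := by
    intro p
    simp only [deltaM]
    by_cases h : p = (j, j)
    · rw [if_pos h, if_pos h, mul_one]
    · rw [if_neg h, if_neg h, mul_zero]
  rw [Finset.sum_congr rfl fun p _ => hterm p,
    Finset.sum_ite_eq' Finset.univ ((j, j) : Fin d × Fin d) (fun p => conj (aM M t p)),
    if_pos (Finset.mem_univ _), aM_diag M h1 t j, map_zero]

lemma IP_aM_aM (h1 : ∀ j t, conj (M j t) * M j t = 1 / d) (hd : 1 ≤ d)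
    (s t : Fin (d ^ 2)) :
    ∑ p : Fin d × Fin d, conj (aM M s p) * aM M t p
      = gMat M s t * conj (gMat M s t) - 1 / d := by
  have hdC : (d : ℂ) ≠ 0 := by exact_mod_cast (Nat.pos_of_ne_zero (by omega)).ne'
  have hdiagval : ∀ (u : Fin (d ^ 2)) (a : Fin d), conj (M a u * conj (M a u)) = 1 / d := by
    intro u a
    have h := h1 a u
    rw [mul_comm] at h
    rw [h, conj_invd]
  have hexp : ∀ p : Fin d × Fin d, conj (aM M s p) * aM M t p
      = conj (M p.1 s * conj (M p.2 s)) * (M p.1 t * conj (M p.2 t))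
        - conj (M p.1 s * conj (M p.2 s)) * (if p.1 = p.2 then (1 : ℂ) / d else 0)
        - conj (if p.1 = p.2 then (1 : ℂ) / d else 0) * (M p.1 t * conj (M p.2 t))
        + conj (if p.1 = p.2 then (1 : ℂ) / d else 0) * (if p.1 = p.2 then (1 : ℂ) / d else 0) := by
    intro p
    simp only [aM, map_sub]
    ring
  rw [Finset.sum_congr rfl fun p _ => hexp p, Finset.sum_add_distrib,
    Finset.sum_sub_distrib, Finset.sum_sub_distrib]
  have e1 : ∑ p : Fin d × Fin d, conj (M p.1 s * conj (M p.2 s)) * (M p.1 t * conj (M p.2 t))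
      = gMat M s t * conj (gMat M s t) := by
    rw [Fintype.sum_prod_type]
    exact L_factor M s t
  have e2 : ∑ p : Fin d × Fin d,
      conj (M p.1 s * conj (M p.2 s)) * (if p.1 = p.2 then (1 : ℂ) / d else 0) = 1 / d := by
    rw [Fintype.sum_prod_type]
    have hrow : ∀ a : Fin d, (∑ b, conj (M a s * conj (M b s)) * (if a = b then (1 : ℂ) / d else 0))
        = 1 / d * (1 / d) := by
      intro a
      have hterm : ∀ b : Fin d, conj (M a s * conj (M b s)) * (if a = b then (1 : ℂ) / d else 0)
          = if a = b then conj (M a s * conj (M b s)) * (1 / d) else 0 := by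
        intro b
        rw [mul_ite, mul_zero]
      rw [Finset.sum_congr rfl fun b _ => hterm b,
        Finset.sum_ite_eq Finset.univ a (fun b => conj (M a s * conj (M b s)) * (1 / d)),
        if_pos (Finset.mem_univ _), hdiagval s a]
    rw [Finset.sum_congr rfl fun a _ => hrow a, Finset.sum_const, Finset.card_univ,
      Fintype.card_fin, nsmul_eq_mul]
    field_simp
  have e3 : ∑ p : Fin d × Fin d,
      conj (if p.1 = p.2 then (1 : ℂ) / d else 0) * (M p.1 t * conj (M p.2 t)) = 1 / d := by
    rw [Fintype.sum_prod_type]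
    have hrow : ∀ a : Fin d, (∑ b, conj (if a = b then (1 : ℂ) / d else 0) * (M a t * conj (M b t)))
        = 1 / d * (1 / d) := by
      intro a
      have hterm : ∀ b : Fin d, conj (if a = b then (1 : ℂ) / d else 0) * (M a t * conj (M b t))
          = if a = b then (1 / d : ℂ) * (M a t * conj (M b t)) else 0 := by
        intro b
        by_cases hab : a = b
        · rw [if_pos hab, if_pos hab, conj_invd]
        · rw [if_neg hab, if_neg hab, map_zero, zero_mul]
      rw [Finset.sum_congr rfl fun b _ => hterm b,
        Finset.sum_ite_eq Finset.univ a (fun b => (1 / d : ℂ) * (M a t * conj (M b t))),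
        if_pos (Finset.mem_univ _)]
      have h := h1 a t
      rw [mul_comm] at h
      rw [h]
    rw [Finset.sum_congr rfl fun a _ => hrow a, Finset.sum_const, Finset.card_univ,
      Fintype.card_fin, nsmul_eq_mul]
    field_simp
  have e4 : ∑ p : Fin d × Fin d,
      conj (if p.1 = p.2 then (1 : ℂ) / d else 0) * (if p.1 = p.2 then (1 : ℂ) / d else 0)
      = 1 / d := by
    rw [Fintype.sum_prod_type]
    have hrow : ∀ a : Fin d, (∑ b, conj (if a = b then (1 : ℂ) / d else 0) *
        (if a = b then (1 : ℂ) / d else 0)) = 1 / d * (1 / d) := by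
      intro a
      have hterm : ∀ b : Fin d, conj (if a = b then (1 : ℂ) / d else 0) *
          (if a = b then (1 : ℂ) / d else 0)
          = if a = b then ((1 : ℂ) / d) * (1 / d) else 0 := by
        intro b
        by_cases hab : a = b
        · rw [if_pos hab, if_pos hab, conj_invd]
        · rw [if_neg hab, if_neg hab, map_zero, zero_mul]
      rw [Finset.sum_congr rfl fun b _ => hterm b,
        Finset.sum_ite_eq Finset.univ a (fun _ => ((1 : ℂ) / d) * (1 / d)),
        if_pos (Finset.mem_univ _)]
    rw [Finset.sum_congr rfl fun a _ => hrow a, Finset.sum_const, Finset.card_univ,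
      Fintype.card_fin, nsmul_eq_mul]
    field_simp
  rw [e1, e2, e3, e4]
  ring

lemma sum_aM_comp (h1 : ∀ j t, conj (M j t) * M j t = 1 / d) (hd : 1 ≤ d)
    (h3 : ∀ s t, s ≠ t → gMat M s t = 0 ∨ conj (gMat M s t) * gMat M s t = 1 / d)
    (s : Fin (d ^ 2)) (p : Fin d × Fin d) :
    ∑ t ∈ compM M s, aM M t p = 0 := by
  have hdC : (d : ℂ) ≠ 0 := by exact_mod_cast (Nat.pos_of_ne_zero (by omega)).ne'
  simp only [aM]
  rw [Finset.sum_sub_distrib, comp_ONB M h1 hd h3 s p.1 p.2, Finset.sum_const]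
  obtain ⟨hcard, _⟩ := classification M h1 hd h3 s
  rw [hcard, nsmul_eq_mul]
  by_cases hp : p.1 = p.2
  · rw [if_pos hp, if_pos hp]
    field_simp
    ring
  · rw [if_neg hp, if_neg hp]
    ring

lemma IP_aM_aM_val (h1 : ∀ j t, conj (M j t) * M j t = 1 / d) (hd : 1 ≤ d)
    (h3 : ∀ s t, s ≠ t → gMat M s t = 0 ∨ conj (gMat M s t) * gMat M s t = 1 / d)
    (s t : Fin (d ^ 2)) :
    ∑ p : Fin d × Fin d, conj (aM M t p) * aM M s p
      = if t ∈ compM M s then (if t = s then 1 - 1 / (d : ℂ) else -(1 / d)) else 0 := by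
  rw [IP_aM_aM M h1 hd t s]
  by_cases hts : t = s
  · subst hts
    rw [if_pos (mem_compM_self M t), if_pos rfl, gMat_self M h1 hd, map_one, mul_one]
  · by_cases hmem : t ∈ compM M s
    · rw [if_pos hmem, if_neg hts]
      obtain ⟨_, hNt⟩ := classification M h1 hd h3 t
      have hcc : compM M t = compM M s := (compM_eq M ((mem_compM M).1 hmem)).symm
      have hsNbr : s ∈ NbrM M t := by
        rw [hNt, hcc]
        exact Finset.mem_sdiff.2 ⟨mem_compM_self M s, by simpa using (fun h => hts h.symm : s ≠ t)⟩
      have hg : gMat M t s = 0 := ((mem_NbrM M).1 hsNbr).2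
      rw [hg, map_zero, mul_zero, zero_sub]
    · rw [if_neg hmem]
      have hst : s ≠ t := fun h => hts h.symm
      have hgne : gMat M s t ≠ 0 := by
        intro hg
        exact hmem ((mem_compM M).2 (Relation.ReflTransGen.single ⟨hst, hg⟩))
      rcases h3 s t hst with h | h
      · exact absurd h hgne
      · rw [gMat_conj M s t, Complex.conj_conj, h]
        ring

end Frame

section Span

variable (M : Fin d → Fin (d ^ 2) → ℂ)

lemma IP_aM_aM_val' (h1 : ∀ j t, conj (M j t) * M j t = 1 / d) (hd : 1 ≤ d)
    (h3 : ∀ s t, s ≠ t → gMat M s t = 0 ∨ conj (gMat M s t) * gMat M s t = 1 / d)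
    (s t : Fin (d ^ 2)) :
    ∑ p : Fin d × Fin d, conj (aM M s p) * aM M t p
      = if t ∈ compM M s then (if t = s then 1 - 1 / (d : ℂ) else -(1 / d)) else 0 := by
  rw [IP_aM_aM_val M h1 hd h3 t s]
  have hmemiff : s ∈ compM M t ↔ t ∈ compM M s :=
    ⟨fun h => (mem_compM M).2 (ReachM_symm M ((mem_compM M).1 h)),
     fun h => (mem_compM M).2 (ReachM_symm M ((mem_compM M).1 h))⟩
  by_cases hmem : t ∈ compM M s
  · rw [if_pos (hmemiff.2 hmem), if_pos hmem]
    by_cases hts : t = s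
    · rw [if_pos hts.symm, if_pos hts]
    · rw [if_neg (fun h => hts h.symm), if_neg hts]
  · rw [if_neg (fun h => hmem (hmemiff.1 h)), if_neg hmem]

lemma card_reps (h1 : ∀ j t, conj (M j t) * M j t = 1 / d) (hd : 1 ≤ d)
    (h3 : ∀ s t, s ≠ t → gMat M s t = 0 ∨ conj (gMat M s t) * gMat M s t = 1 / d) :
    (Finset.univ.filter (fun m : Fin (d ^ 2) => repM M m = m)).card = d := by
  classical
  set Rall := Finset.univ.filter (fun m : Fin (d ^ 2) => repM M m = m) with hRall
  have hmem : ∀ t : Fin (d ^ 2), t ∈ (Finset.univ : Finset (Fin (d ^ 2))) → repM M t ∈ Rall :=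
    fun t _ => Finset.mem_filter.2 ⟨Finset.mem_univ _, repM_idem M t⟩
  have hfib := Finset.card_eq_sum_card_fiberwise hmem
  have hfibeq : ∀ m ∈ Rall, (Finset.univ.filter (fun t => repM M t = m)).card = d := by
    intro m hm
    have hmm : repM M m = m := (Finset.mem_filter.1 hm).2
    have hset : Finset.univ.filter (fun t => repM M t = m) = compM M m := by
      ext t
      simp only [Finset.mem_filter, Finset.mem_univ, true_and]
      constructor
      · intro h
        have h2 : compM M t = compM M m := by rw [← h, compM_repM]
        rw [← h2]
        exact mem_compM_self M t
      · intro h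
        rw [repM_eq_of_mem M h, hmm]
    rw [hset]
    exact (classification M h1 hd h3 m).1
  rw [Finset.sum_congr rfl hfibeq, Finset.sum_const, smul_eq_mul] at hfib
  have huniv : (Finset.univ : Finset (Fin (d ^ 2))).card = d ^ 2 := by
    rw [Finset.card_univ, Fintype.card_fin]
  rw [huniv] at hfib
  have hsq : d * d = d ^ 2 := (sq d).symm
  have : Rall.card * d = d * d := by omega
  exact Nat.eq_of_mul_eq_mul_right (by omega) (by omega : Rall.card * d = d * d)

/-- Sum against an indexed family. -/
lemma pair_sum {α : Type*} [Fintype α] (w : Fin d × Fin d → ℂ) (S : Finset α)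
    (c : α → ℂ) (v : α → Fin d × Fin d → ℂ) :
    (∑ p : Fin d × Fin d, conj (w p) * (∑ i ∈ S, c i • v i) p)
      = ∑ i ∈ S, c i * ∑ p, conj (w p) * v i p := by
  have happ : ∀ p, (∑ i ∈ S, c i • v i) p = ∑ i ∈ S, c i * v i p := by
    intro p
    rw [Finset.sum_apply]
    exact Finset.sum_congr rfl fun i _ => rfl
  calc (∑ p : Fin d × Fin d, conj (w p) * (∑ i ∈ S, c i • v i) p)
      = ∑ p : Fin d × Fin d, ∑ i ∈ S, conj (w p) * (c i * v i p) := by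
        refine Finset.sum_congr rfl fun p _ => ?_
        rw [happ p, Finset.mul_sum]
    _ = ∑ i ∈ S, ∑ p : Fin d × Fin d, conj (w p) * (c i * v i p) := Finset.sum_comm
    _ = ∑ i ∈ S, c i * ∑ p, conj (w p) * v i p := by
        refine Finset.sum_congr rfl fun i _ => ?_
        rw [Finset.mul_sum]
        exact Finset.sum_congr rfl fun p _ => by ring

def nonreps : Finset (Fin (d ^ 2)) := Finset.univ.filter (fun t => repM M t ≠ t)

lemma frame_indep (h1 : ∀ j t, conj (M j t) * M j t = 1 / d) (hd : 1 ≤ d)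
    (h3 : ∀ s t, s ≠ t → gMat M s t = 0 ∨ conj (gMat M s t) * gMat M s t = 1 / d) :
    LinearIndependent ℂ (Sum.elim (deltaM d)
      (fun b : {t // t ∈ nonreps M} => aM M (b : Fin (d ^ 2)))) := by
  classical
  have hdC : (d : ℂ) ≠ 0 := by exact_mod_cast (Nat.pos_of_ne_zero (by omega)).ne'
  rw [Fintype.linearIndependent_iff]
  intro g hg
  set lam : Fin (d ^ 2) → ℂ :=
    fun t => if h : repM M t ≠ t then
      g (Sum.inr ⟨t, Finset.mem_filter.2 ⟨Finset.mem_univ _, h⟩⟩) else 0 with hlam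
  have hlam_rep : ∀ t, repM M t = t → lam t = 0 := by
    intro t ht
    rw [hlam]
    simp only
    rw [dif_neg (by simpa using ht)]
  have hlam_val : ∀ b : {t // t ∈ nonreps M}, lam (b : Fin (d ^ 2)) = g (Sum.inr b) := by
    intro b
    have hb : repM M (b : Fin (d ^ 2)) ≠ (b : Fin (d ^ 2)) :=
      (Finset.mem_filter.1 b.2).2
    rw [hlam]
    simp only
    rw [dif_pos hb]
  have hsum : (∑ j, g (Sum.inl j) • deltaM d j) + ∑ t, lam t • aM M t = 0 := by
    rw [← hg, Fintype.sum_sum_type]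
    simp only [Sum.elim_inl, Sum.elim_inr]
    congr 1
    have hstep : ∑ b : {t // t ∈ nonreps M}, g (Sum.inr b) • aM M (b : Fin (d ^ 2))
        = ∑ t ∈ nonreps M, lam t • aM M t := by
      rw [Finset.univ_eq_attach, ← Finset.sum_attach (nonreps M) (fun t => lam t • aM M t)]
      exact Finset.sum_congr rfl fun b _ => by rw [hlam_val b]
    rw [hstep]
    symm
    apply Finset.sum_subset (Finset.filter_subset _ _)
    intro t _ ht
    have hrt : repM M t = t := by
      by_contra hc
      exact ht (Finset.mem_filter.2 ⟨Finset.mem_univ _, hc⟩)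
    rw [hlam_rep t hrt, zero_smul]
  have hpair : ∀ s : Fin (d ^ 2),
      lam s * (1 - 1 / (d : ℂ)) + (∑ u ∈ (compM M s).erase s, lam u) * (-(1 / (d : ℂ))) = 0 := by
    intro s
    have happ := congrArg (fun v : Fin d × Fin d → ℂ => ∑ p, conj (aM M s p) * v p) hsum
    simp only [Pi.add_apply, Pi.zero_apply, mul_zero, Finset.sum_const_zero] at happ
    have hsplit : ∑ p : Fin d × Fin d,
        conj (aM M s p) * ((∑ j, g (Sum.inl j) • deltaM d j) p + (∑ t, lam t • aM M t) p)
        = (∑ p : Fin d × Fin d, conj (aM M s p) * (∑ j, g (Sum.inl j) • deltaM d j) p)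
          + ∑ p : Fin d × Fin d, conj (aM M s p) * (∑ t, lam t • aM M t) p := by
      rw [← Finset.sum_add_distrib]
      exact Finset.sum_congr rfl fun p _ => by ring
    rw [hsplit, pair_sum (aM M s) Finset.univ (fun j => g (Sum.inl j)) (deltaM d),
      pair_sum (aM M s) Finset.univ lam (aM M)] at happ
    have hz1 : ∑ j, g (Sum.inl j) * ∑ p, conj (aM M s p) * deltaM d j p = 0 := by
      refine Finset.sum_eq_zero fun j _ => ?_
      rw [IP_aM_delta M h1 s j, mul_zero]
    rw [hz1, zero_add] at happ
    have hz2 : ∀ t, lam t * (∑ p, conj (aM M s p) * aM M t p)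
        = if t ∈ compM M s then lam t * (if t = s then 1 - 1 / (d : ℂ) else -(1 / d)) else 0 := by
      intro t
      rw [IP_aM_aM_val' M h1 hd h3 s t, mul_ite, mul_zero]
    rw [Finset.sum_congr rfl fun t _ => hz2 t, Fintype.sum_ite_mem,
      ← Finset.add_sum_erase _ _ (mem_compM_self M s), if_pos rfl] at happ
    have hz3 : ∑ u ∈ (compM M s).erase s, lam u * (if u = s then 1 - 1 / (d : ℂ) else -(1 / d))
        = (∑ u ∈ (compM M s).erase s, lam u) * (-(1 / (d : ℂ))) := by
      rw [Finset.sum_mul]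
      refine Finset.sum_congr rfl fun u hu => ?_
      rw [if_neg (Finset.ne_of_mem_erase hu)]
    rw [hz3] at happ
    exact happ
  have heq : ∀ s, lam s = (1 / (d : ℂ)) * ∑ u ∈ compM M s, lam u := by
    intro s
    have h := hpair s
    have hER : ∑ u ∈ (compM M s).erase s, lam u = (∑ u ∈ compM M s, lam u) - lam s := by
      rw [← Finset.add_sum_erase _ lam (mem_compM_self M s)]
      ring
    rw [hER] at h
    field_simp at h ⊢
    linear_combination h
  have hlam0 : ∀ t, lam t = 0 := by
    intro t
    have e1 := heq t
    have e2 := heq (repM M t)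
    rw [compM_repM] at e2
    rw [hlam_rep (repM M t) (repM_idem M t)] at e2
    rw [e1, ← e2]
  intro i
  cases i with
  | inr b =>
    rw [← hlam_val b]
    exact hlam0 _
  | inl j =>
    have hB : (∑ t, lam t • aM M t) = 0 :=
      Finset.sum_eq_zero fun t _ => by rw [hlam0 t, zero_smul]
    rw [hB, add_zero] at hsum
    have happ := congrFun hsum (j, j)
    rw [Finset.sum_apply] at happ
    have hterm : ∀ j' : Fin d,
        (g (Sum.inl j') • deltaM d j') (j, j) = if j' = j then g (Sum.inl j') else 0 := by
      intro j'
      simp only [Pi.smul_apply, smul_eq_mul, deltaM, Prod.mk.injEq]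
      by_cases h : j' = j
      · subst h
        rw [if_pos ⟨rfl, rfl⟩, if_pos rfl, mul_one]
      · rw [if_neg (fun hh : j = j' ∧ j = j' => h hh.1.symm), if_neg h, mul_zero]
    rw [Finset.sum_congr rfl fun j' _ => hterm j',
      Finset.sum_ite_eq' Finset.univ j (fun j' => g (Sum.inl j')),
      if_pos (Finset.mem_univ _)] at happ
    simpa using happ

end Span

section Operator

variable (M : Fin d → Fin (d ^ 2) → ℂ)

lemma card_nonreps (h1 : ∀ j t, conj (M j t) * M j t = 1 / d) (hd : 1 ≤ d)
    (h3 : ∀ s t, s ≠ t → gMat M s t = 0 ∨ conj (gMat M s t) * gMat M s t = 1 / d) :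
    (nonreps M).card = d ^ 2 - d := by
  classical
  have hsplit := Finset.card_filter_add_card_filter_not
    (s := (Finset.univ : Finset (Fin (d ^ 2)))) (p := fun t => repM M t = t)
  have he : (nonreps M) = Finset.univ.filter (fun t => ¬ repM M t = t) := rfl
  have hreps := card_reps M h1 hd h3
  have huniv : (Finset.univ : Finset (Fin (d ^ 2))).card = d ^ 2 := by
    rw [Finset.card_univ, Fintype.card_fin]
  rw [he]
  omega

lemma frame_span (h1 : ∀ j t, conj (M j t) * M j t = 1 / d) (hd : 1 ≤ d)
    (h3 : ∀ s t, s ≠ t → gMat M s t = 0 ∨ conj (gMat M s t) * gMat M s t = 1 / d) :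
    Submodule.span ℂ (Set.range (Sum.elim (deltaM d)
      (fun b : {t // t ∈ nonreps M} => aM M (b : Fin (d ^ 2))))) = ⊤ := by
  haveI : Nonempty (Fin d ⊕ {t // t ∈ nonreps M}) := ⟨Sum.inl ⟨0, by omega⟩⟩
  apply LinearIndependent.span_eq_top_of_card_eq_finrank (frame_indep M h1 hd h3)
  rw [Fintype.card_sum, Fintype.card_coe, card_nonreps M h1 hd h3, Fintype.card_fin,
    Module.finrank_fintype_fun_eq_card, Fintype.card_prod, Fintype.card_fin]
  have hdd : d ≤ d ^ 2 := by nlinarith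
  have hsq : d * d = d ^ 2 := (sq d).symm
  omega

def SMop : (Fin d × Fin d → ℂ) →ₗ[ℂ] (Fin d × Fin d → ℂ) where
  toFun v := fun p => (∑ j, (∑ q, conj (deltaM d j q) * v q) * deltaM d j p)
      + ∑ t, (∑ q, conj (aM M t q) * v q) * aM M t p
  map_add' v w := by
    funext p
    simp only [Pi.add_apply, mul_add, add_mul, Finset.sum_add_distrib]
    ring
  map_smul' c v := by
    funext p
    simp only [Pi.smul_apply, smul_eq_mul, RingHom.id_apply]
    have hin : ∀ w : Fin d × Fin d → ℂ,
        (∑ q, conj (w q) * (c * v q)) = c * ∑ q, conj (w q) * v q := by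
      intro w
      rw [Finset.mul_sum]
      exact Finset.sum_congr rfl fun q _ => by ring
    rw [mul_add, Finset.mul_sum, Finset.mul_sum]
    congr 1
    · exact Finset.sum_congr rfl fun j _ => by rw [hin]; ring
    · exact Finset.sum_congr rfl fun t _ => by rw [hin]; ring

lemma SMop_delta (h1 : ∀ j t, conj (M j t) * M j t = 1 / d) (j : Fin d) :
    SMop M (deltaM d j) = deltaM d j := by
  funext p
  simp only [SMop, LinearMap.coe_mk, AddHom.coe_mk]
  have hz : ∀ t : Fin (d ^ 2), (∑ q, conj (aM M t q) * deltaM d j q) * aM M t p = 0 :=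
    fun t => by rw [IP_aM_delta M h1 t j, zero_mul]
  rw [Finset.sum_congr rfl fun t _ => hz t, Finset.sum_const_zero, add_zero]
  have hterm : ∀ k : Fin d, (∑ q, conj (deltaM d k q) * deltaM d j q) * deltaM d k p
      = if k = j then deltaM d k p else 0 := by
    intro k
    rw [IP_delta_delta k j, ite_mul, zero_mul, one_mul]
  rw [Finset.sum_congr rfl fun k _ => hterm k,
    Finset.sum_ite_eq' Finset.univ j (fun k => deltaM d k p), if_pos (Finset.mem_univ _)]

lemma SMop_aM (h1 : ∀ j t, conj (M j t) * M j t = 1 / d) (hd : 1 ≤ d)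
    (h3 : ∀ s t, s ≠ t → gMat M s t = 0 ∨ conj (gMat M s t) * gMat M s t = 1 / d)
    (s : Fin (d ^ 2)) : SMop M (aM M s) = aM M s := by
  funext p
  simp only [SMop, LinearMap.coe_mk, AddHom.coe_mk]
  have hz1 : ∀ k : Fin d, (∑ q, conj (deltaM d k q) * aM M s q) * deltaM d k p = 0 :=
    fun k => by rw [IP_delta_aM M h1 k s, zero_mul]
  rw [Finset.sum_congr rfl fun k _ => hz1 k, Finset.sum_const_zero, zero_add]
  have hz2 : ∀ t, (∑ q, conj (aM M t q) * aM M s q) * aM M t p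
      = if t ∈ compM M s then (if t = s then 1 - 1 / (d : ℂ) else -(1 / d)) * aM M t p
        else 0 := by
    intro t
    rw [IP_aM_aM_val M h1 hd h3 s t, ite_mul, zero_mul]
  rw [Finset.sum_congr rfl fun t _ => hz2 t, Fintype.sum_ite_mem,
    ← Finset.add_sum_erase _ _ (mem_compM_self M s), if_pos rfl]
  have hz3 : ∑ u ∈ (compM M s).erase s, (if u = s then 1 - 1 / (d : ℂ) else -(1 / d)) * aM M u p
      = -(1 / (d : ℂ)) * ∑ u ∈ (compM M s).erase s, aM M u p := by
    rw [Finset.mul_sum]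
    exact Finset.sum_congr rfl fun u hu => by rw [if_neg (Finset.ne_of_mem_erase hu)]
  rw [hz3]
  have hz4 : ∑ u ∈ (compM M s).erase s, aM M u p = - aM M s p := by
    have h := sum_aM_comp M h1 hd h3 s p
    rw [← Finset.add_sum_erase _ _ (mem_compM_self M s)] at h
    linear_combination h
  rw [hz4]
  ring

lemma frame_identity (h1 : ∀ j t, conj (M j t) * M j t = 1 / d) (hd : 1 ≤ d)
    (h3 : ∀ s t, s ≠ t → gMat M s t = 0 ∨ conj (gMat M s t) * gMat M s t = 1 / d)
    (v : Fin d × Fin d → ℂ) : SMop M v = v := by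
  have hid : SMop M = LinearMap.id := by
    apply LinearMap.ext_on (frame_span M h1 hd h3)
    rintro x ⟨i, rfl⟩
    cases i with
    | inl j => simpa using SMop_delta M h1 j
    | inr b => simpa using SMop_aM M h1 hd h3 (b : Fin (d ^ 2))
  rw [hid]
  rfl

lemma D2 (h1 : ∀ j t, conj (M j t) * M j t = 1 / d) (hd : 1 ≤ d)
    (h3 : ∀ s t, s ≠ t → gMat M s t = 0 ∨ conj (gMat M s t) * gMat M s t = 1 / d)
    {k q : Fin d} (hkq : k ≠ q) (p : Fin d × Fin d) :
    ∑ t, conj (aM M t (k, q)) * aM M t p = if p = (k, q) then 1 else 0 := by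
  classical
  set v : Fin d × Fin d → ℂ := fun r => if r = (k, q) then 1 else 0 with hv
  have hident := congrFun (frame_identity M h1 hd h3 v) p
  simp only [SMop, LinearMap.coe_mk, AddHom.coe_mk] at hident
  have hcol : ∀ w : Fin d × Fin d → ℂ, (∑ r, conj (w r) * v r) = conj (w (k, q)) := by
    intro w
    have hterm : ∀ r, conj (w r) * v r = if r = (k, q) then conj (w r) else 0 := by
      intro r
      simp only [hv]
      by_cases h : r = (k, q)
      · rw [if_pos h, if_pos h, mul_one]
      · rw [if_neg h, if_neg h, mul_zero]
    rw [Finset.sum_congr rfl fun r _ => hterm r,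
      Finset.sum_ite_eq' Finset.univ ((k, q) : Fin d × Fin d) (fun r => conj (w r)),
      if_pos (Finset.mem_univ _)]
  rw [Finset.sum_congr rfl fun (j : Fin d) _ => by rw [hcol (deltaM d j)],
    Finset.sum_congr rfl fun (t : Fin (d ^ 2)) _ => by rw [hcol (aM M t)]] at hident
  have hdel : ∀ j : Fin d, conj (deltaM d j (k, q)) * deltaM d j p = 0 := by
    intro j
    have : deltaM d j (k, q) = 0 := by
      simp only [deltaM, Prod.mk.injEq]
      rw [if_neg]
      intro hh
      exact hkq (hh.1.trans hh.2.symm)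
    rw [this, map_zero, zero_mul]
  rw [Finset.sum_congr rfl fun j _ => hdel j, Finset.sum_const_zero, zero_add] at hident
  exact hident

end Operator

end MUBAux

/-- If `B = {c_1, …, c_{d²}}` consists of `d²` distinct unit vectors in `ℂ^d`, all unbiased
to a fixed orthonormal basis `e`, and pairwise either orthogonal or unbiased, then the
coordinatewise quotients `r_{j/k}` of distinct rows of the `d × d²` matrix
`M (j, t) = ⟪e j, c t⟫` are pairwise orthogonal in `ℂ^{d²}` and are all orthogonal to the
all-ones vector. -/
theorem row_quotients_orthogonal (d : ℕ)
    (e : OrthonormalBasis (Fin d) ℂ (EuclideanSpace ℂ (Fin d)))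
    (c : Fin (d ^ 2) → EuclideanSpace ℂ (Fin d)) (hinj : Function.Injective c)
    (hunit : ∀ t, ‖c t‖ = 1)
    (hunb : ∀ t k, ‖⟪c t, e k⟫‖ = 1 / Real.sqrt d)
    (horth : ∀ t t', t ≠ t' → ⟪c t, c t'⟫ = 0 ∨ ‖⟪c t, c t'⟫‖ = 1 / Real.sqrt d)
    (M : Fin d → Fin (d ^ 2) → ℂ) (hM : ∀ j t, M j t = ⟪e j, c t⟫)
    (r : Fin d → Fin d → Fin (d ^ 2) → ℂ) (hr : ∀ j k t, r j k t = M j t / M k t) :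
    (∀ j k s q : Fin d, j ≠ k → s ≠ q → (j, k) ≠ (s, q) →
        ∑ t, conj (r j k t) * r s q t = 0) ∧
      (∀ j k : Fin d, j ≠ k → ∑ t, r j k t = 0) := by
  classical
  by_cases hd2 : 2 ≤ d
  swap
  · have hvac : ∀ j k : Fin d, j ≠ k → False := by
      intro j k hjk
      apply hjk
      have hj := j.2
      have hk := k.2
      exact Fin.ext (by omega)
    exact ⟨fun j k s q hjk _ _ => (hvac j k hjk).elim, fun j k hjk => (hvac j k hjk).elim⟩
  have hd : 1 ≤ d := by omega
  have hdC : (d : ℂ) ≠ 0 := by exact_mod_cast (Nat.pos_of_ne_zero (by omega)).ne'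
  have hdR : (0 : ℝ) ≤ (d : ℝ) := by positivity
  have hnorm_sq : ∀ z : ℂ, ‖z‖ = 1 / Real.sqrt d → conj z * z = 1 / (d : ℂ) := by
    intro z hz
    rw [← Complex.normSq_eq_conj_mul_self, Complex.normSq_eq_norm_sq, hz]
    rw [div_pow, one_pow, Real.sq_sqrt hdR]
    push_cast
    ring
  have h1 : ∀ (j : Fin d) (t : Fin (d ^ 2)), conj (M j t) * M j t = 1 / (d : ℂ) := by
    intro j t
    apply hnorm_sq
    rw [hM j t, norm_inner_symm]
    exact hunb t j
  have hg : ∀ s t, gMat M s t = ⟪c s, c t⟫ := by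
    intro s t
    calc gMat M s t = ∑ j, ⟪c s, e j⟫ * ⟪e j, c t⟫ := by
          refine Finset.sum_congr rfl fun j _ => ?_
          rw [hM j s, hM j t, inner_conj_symm]
      _ = ⟪c s, c t⟫ := e.sum_inner_mul_inner (c s) (c t)
  have h3 : ∀ s t, s ≠ t → gMat M s t = 0 ∨ conj (gMat M s t) * gMat M s t = 1 / (d : ℂ) := by
    intro s t hst
    rcases horth s t hst with h | h
    · left
      rw [hg]
      exact h
    · right
      rw [hg]
      exact hnorm_sq _ h
  have hAsum : ∀ p : Fin d × Fin d, ∑ t, aM M t p = 0 := by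
    intro p
    by_cases hp : p.1 = p.2
    · refine Finset.sum_eq_zero fun t _ => ?_
      rw [show p = (p.1, p.1) from Prod.ext rfl hp.symm]
      exact aM_diag M h1 t p.1
    · have hD := D1 M h1 hd h3 (j := p.1) (k := p.2) hp
      simp only [aM, if_neg hp]
      calc ∑ t, (M p.1 t * conj (M p.2 t) - 0) = ∑ t, M p.1 t * conj (M p.2 t) := by
            exact Finset.sum_congr rfl fun t _ => by ring
        _ = 0 := hD
  have hinv : ∀ (k : Fin d) (t : Fin (d ^ 2)), (M k t)⁻¹ = (d : ℂ) * conj (M k t) := by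
    intro k t
    have h := h1 k t
    have hmul : ((d : ℂ) * conj (M k t)) * M k t = 1 := by
      rw [mul_assoc, h]
      field_simp
    exact inv_eq_of_mul_eq_one_left hmul
  constructor
  · intro j k s q hjk hsq hne
    have hterm : ∀ t, conj (r j k t) * r s q t
        = (d : ℂ) ^ 2 * (conj (M j t * conj (M s t)) * (M k t * conj (M q t))) := by
      intro t
      rw [hr, hr, div_eq_mul_inv, div_eq_mul_inv, hinv k t, hinv q t]
      simp only [map_mul, Complex.conj_conj, map_natCast]
      ring
    rw [Finset.sum_congr rfl fun t _ => hterm t, ← Finset.mul_sum]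
    have hsplit : ∀ t, conj (M j t * conj (M s t)) * (M k t * conj (M q t))
        = conj (aM M t (j, s)) * aM M t (k, q)
          + conj (aM M t (j, s)) * (if k = q then (1 : ℂ) / d else 0)
          + conj (if j = s then (1 : ℂ) / d else 0) * aM M t (k, q)
          + conj (if j = s then (1 : ℂ) / d else 0) * (if k = q then (1 : ℂ) / d else 0) := by
      intro t
      have hA : M j t * conj (M s t) = aM M t (j, s) + (if j = s then (1 : ℂ) / d else 0) := by
        simp only [aM]
        ring
      have hB : M k t * conj (M q t) = aM M t (k, q) + (if k = q then (1 : ℂ) / d else 0) := by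
        simp only [aM]
        ring
      rw [hA, hB, map_add]
      ring
    rw [Finset.sum_congr rfl fun t _ => hsplit t]
    rw [Finset.sum_add_distrib, Finset.sum_add_distrib, Finset.sum_add_distrib]
    have hz2 : ∑ t, conj (aM M t (j, s)) * (if k = q then (1 : ℂ) / d else 0) = 0 := by
      rw [← Finset.sum_mul]
      have : ∑ t, conj (aM M t (j, s)) = 0 := by
        rw [← map_sum, hAsum (j, s), map_zero]
      rw [this, zero_mul]
    have hz3 : ∑ t, conj (if j = s then (1 : ℂ) / d else 0) * aM M t (k, q) = 0 := by
      rw [← Finset.mul_sum, hAsum (k, q), mul_zero]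
    have hz4 : ∑ _t : Fin (d ^ 2), conj (if j = s then (1 : ℂ) / d else 0) * (if k = q then (1 : ℂ) / d else 0)
        = (d : ℂ) ^ 2 * (conj (if j = s then (1 : ℂ) / d else 0) *
            (if k = q then (1 : ℂ) / d else 0)) := by
      rw [Finset.sum_const, Finset.card_univ, Fintype.card_fin, nsmul_eq_mul]
      push_cast
      ring
    rw [hz2, hz3, hz4, add_zero, add_zero]
    by_cases hjs : j = s
    · have hkq : k ≠ q := by
        intro hh
        exact hne (by rw [hjs, hh])
      have hW : ∑ t, conj (aM M t (j, s)) * aM M t (k, q) = 0 := by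
        refine Finset.sum_eq_zero fun t _ => ?_
        rw [show ((j, s) : Fin d × Fin d) = (j, j) from by rw [hjs], aM_diag M h1 t j,
          map_zero, zero_mul]
      rw [hW, if_neg hkq]
      simp
    · by_cases hkq : k = q
      · have hW : ∑ t, conj (aM M t (j, s)) * aM M t (k, q) = 0 := by
          refine Finset.sum_eq_zero fun t _ => ?_
          rw [show ((k, q) : Fin d × Fin d) = (k, k) from by rw [hkq], aM_diag M h1 t k,
            mul_zero]
        rw [hW, if_neg hjs]
        simp
      · have hW := D2 M h1 hd h3 (k := j) (q := s) hjs ((k, q) : Fin d × Fin d)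
        have hWz : ∑ t, conj (aM M t (j, s)) * aM M t (k, q) = 0 := by
          rw [hW, if_neg]
          intro hh
          have : k = j := (Prod.mk.injEq _ _ _ _ ▸ hh).1
          exact hjk this.symm
        rw [hWz, if_neg hjs]
        simp
  · intro j k hjk
    have hterm : ∀ t, r j k t = (d : ℂ) * (M j t * conj (M k t)) := by
      intro t
      rw [hr, div_eq_mul_inv, hinv k t]
      ring
    rw [Finset.sum_congr rfl fun t _ => hterm t, ← Finset.mul_sum,
      D1 M h1 hd h3 hjk, mul_zero]
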